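/- Let E be a finite linearly ordered set with least element 0, let X be a finite set, and let d be an E-valued ultrametric on X. Then there exist a finite set Y ⊇ X and an E-valued ultrametric d' on Y extending d such that d' : Y × Y → E is surjective (i.e., the extension is precise and has the same distance set E). -/
import Mathlib


/-- An `E`-valued ultrametric on `X`, where `E` is a linear order whose least element
`⊥` plays the role of `0`. -/
def IsUltrametric {X E : Type*} [LinearOrder E] [OrderBot E] (d : X → X → E) : Prop :=
  (∀ x y, d x y = ⊥ ↔ x = y) ∧ (∀ x y, d x y = d y x) ∧
  (∀ x y z, d x z ≤ max (d x y) (d y z))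

/-- Every finite `E`-valued ultrametric space (`E` a finite distance set) extends to a
finite precise `E`-valued ultrametric space with the same distance set: all distances
in `E` are attained. -/
theorem stmt3 {E : Type} [LinearOrder E] [OrderBot E] [Fintype E]
    {X : Type} [Fintype X] (d : X → X → E) (hd : IsUltrametric d) :
    ∃ (Y : Type) (_ : Fintype Y) (ι : X ↪ Y) (d' : Y → Y → E),
      IsUltrametric d' ∧ (∀ x x', d' (ι x) (ι x') = d x x') ∧
      Function.Surjective (fun p : Y × Y => d' p.1 p.2) := by
  by_cases h : ∀ e : E, e = ⊥
  · -- degenerate case: E = {⊥}, hence X is a subsingleton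
    have hX : ∀ x y : X, x = y := fun x y => (hd.1 x y).mp (h _)
    refine ⟨E, inferInstance, ⟨fun _ => ⊥, fun a b _ => hX a b⟩, fun _ _ => ⊥, ?_, ?_, ?_⟩
    · refine ⟨fun e f => ⟨fun _ => (h e).trans (h f).symm, fun _ => rfl⟩,
        fun _ _ => rfl, fun _ _ _ => le_max_left _ _⟩
    · intro x x'; rw [hX x x', (hd.1 x' x').mpr rfl]
    · intro e; exact ⟨(⊥, ⊥), (h e).symm⟩
  · push_neg at h
    obtain ⟨e₀, he₀⟩ := h
    set m : E := (Finset.univ : Finset E).max' ⟨⊥, Finset.mem_univ _⟩ with hm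
    have hle : ∀ e : E, e ≤ m := fun e => Finset.le_max' _ _ (Finset.mem_univ _)
    have hmne : m ≠ ⊥ := fun hc => he₀ (le_bot_iff.mp (hc ▸ hle e₀))
    -- the metric on the E part
    let dE : E → E → E := fun e f => if e = f then ⊥ else max e f
    -- the full metric on X ⊕ E
    let d' : X ⊕ E → X ⊕ E → E := fun a b =>
      match a, b with
      | Sum.inl x, Sum.inl y => d x y
      | Sum.inr e, Sum.inr f => dE e f
      | Sum.inl _, Sum.inr _ => m
      | Sum.inr _, Sum.inl _ => m
    have hdEbot : ∀ e f : E, dE e f = ⊥ ↔ e = f := by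
      intro e f
      show (if e = f then ⊥ else max e f) = ⊥ ↔ e = f
      split
      · simp_all
      · constructor
        · intro hb
          have h1 : e ≤ ⊥ := hb ▸ le_max_left e f
          have h2 : f ≤ ⊥ := hb ▸ le_max_right e f
          rw [le_bot_iff.mp h1, le_bot_iff.mp h2]
        · intro hef; simp_all
    have hdEle : ∀ e f : E, dE e f ≤ m := by
      intro e f
      show (if e = f then ⊥ else max e f) ≤ m
      split
      · exact bot_le
      · exact max_le (hle e) (hle f)
    have hdEtri : ∀ e f g : E, dE e g ≤ max (dE e f) (dE f g) := by
      intro e f g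
      show (if e = g then ⊥ else max e g) ≤
        max (if e = f then ⊥ else max e f) (if f = g then ⊥ else max f g)
      rcases eq_or_ne e g with rfl | heg
      · simp
      · rw [if_neg heg]
        rcases eq_or_ne e f with rfl | hef
        · rw [if_neg heg, if_pos rfl]; simp
        · rcases eq_or_ne f g with rfl | hfg
          · rw [if_neg hef, if_pos rfl, max_comm e f]; simp
          · rw [if_neg hef, if_neg hfg, max_le_iff]
            exact ⟨le_max_of_le_left (le_max_left _ _),
              le_max_of_le_right (le_max_right _ _)⟩
    refine ⟨X ⊕ E, inferInstance, ⟨Sum.inl, fun a b hab => Sum.inl.inj hab⟩, d', ⟨?_, ?_, ?_⟩,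
      fun x x' => rfl, ?_⟩
    · rintro (x | e) (y | f)
      · simpa using hd.1 x y
      · simpa using hmne
      · simpa using hmne
      · simpa using hdEbot e f
    · rintro (x | e) (y | f)
      · exact hd.2.1 x y
      · rfl
      · rfl
      · show dE e f = dE f e
        show (if e = f then ⊥ else max e f) = (if f = e then ⊥ else max f e)
        rcases eq_or_ne e f with rfl | hef
        · rfl
        · rw [if_neg hef, if_neg (Ne.symm hef), max_comm]
    · rintro (x | e) (y | f) (z | g)
      · exact hd.2.2 x y z
      · exact le_max_right _ _
      · exact le_trans (hle _) (le_max_left _ _)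
      · exact le_max_left _ _
      · exact le_max_left _ _
      · exact le_trans (hdEle e g) (le_max_left _ _)
      · exact le_max_right _ _
      · exact hdEtri e f g
    · intro e
      rcases eq_or_ne e ⊥ with rfl | he
      · exact ⟨(Sum.inr ⊥, Sum.inr ⊥), by simp [d', dE]⟩
      · exact ⟨(Sum.inr e, Sum.inr ⊥), by simp [d', dE, he]⟩
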